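/- Fix constants a₀ ≠ 0 and a₁ ∈ ℝ, and let φ(t,s) = a₀/√t + a₁ s/t for t > 0, s ∈ ℝ. Define on the open set of points (t,s) with t > 0 and φ(t,s) ≠ 0 the functions H(t,s) = (φ₂₂ − 2(φ₁ − sφ₁₂)) / (2(φ − sφ₂ + (t − s²)φ₂₂)) and E(t,s) = (φ₂ + 2sφ₁)/(2φ) − H(t,s)·(sφ + (t − s²)φ₂)/φ, where subscripts 1 and 2 denote partial derivatives with respect to t and s respectively. Then at every such point: E₂₂ = 0, H₂₂₂ = 0, and (E − sE₂)φ₂ + (H₂ − sH₂₂)(sφ + (t − s²)φ₂) = 0. -/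

import Mathlib

noncomputable section

/-- `φ(t,s) = a₀/√t + a₁ s/t`. -/
def phiFn (a₀ a₁ : ℝ) (t s : ℝ) : ℝ := a₀ / Real.sqrt t + a₁ * s / t

/-- `φ₁`, the partial derivative of `φ` with respect to the first variable. -/
def phi1 (a₀ a₁ : ℝ) (t s : ℝ) : ℝ := deriv (fun u => phiFn a₀ a₁ u s) t

/-- `φ₂`, the partial derivative of `φ` with respect to the second variable. -/
def phi2 (a₀ a₁ : ℝ) (t s : ℝ) : ℝ := deriv (phiFn a₀ a₁ t) s

/-- `φ₁₂ = ∂²φ/∂s∂t`. -/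
def phi12 (a₀ a₁ : ℝ) (t s : ℝ) : ℝ := deriv (fun v => phi1 a₀ a₁ t v) s

/-- `φ₂₂`, the second `s`-derivative of `φ`. -/
def phi22 (a₀ a₁ : ℝ) (t s : ℝ) : ℝ := deriv (phi2 a₀ a₁ t) s

/-- The function `H` from the spray coefficients. -/
def Hfn (a₀ a₁ : ℝ) (t s : ℝ) : ℝ :=
  (phi22 a₀ a₁ t s - 2 * (phi1 a₀ a₁ t s - s * phi12 a₀ a₁ t s)) /
    (2 * (phiFn a₀ a₁ t s - s * phi2 a₀ a₁ t s + (t - s ^ 2) * phi22 a₀ a₁ t s))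

/-- The function `E` from the spray coefficients. -/
def Efn (a₀ a₁ : ℝ) (t s : ℝ) : ℝ :=
  (phi2 a₀ a₁ t s + 2 * s * phi1 a₀ a₁ t s) / (2 * phiFn a₀ a₁ t s)
    - Hfn a₀ a₁ t s * (s * phiFn a₀ a₁ t s + (t - s ^ 2) * phi2 a₀ a₁ t s)
      / phiFn a₀ a₁ t s

/-- `E₂`, the `s`-derivative of `E`. -/
def E2 (a₀ a₁ : ℝ) (t s : ℝ) : ℝ := deriv (Efn a₀ a₁ t) s

/-- `E₂₂`, the second `s`-derivative of `E`. -/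
def E22 (a₀ a₁ : ℝ) (t s : ℝ) : ℝ := deriv (E2 a₀ a₁ t) s

/-- `H₂`, the `s`-derivative of `H`. -/
def H2 (a₀ a₁ : ℝ) (t s : ℝ) : ℝ := deriv (Hfn a₀ a₁ t) s

/-- `H₂₂`, the second `s`-derivative of `H`. -/
def H22 (a₀ a₁ : ℝ) (t s : ℝ) : ℝ := deriv (H2 a₀ a₁ t) s

/-- `H₂₂₂`, the third `s`-derivative of `H`. -/
def H222 (a₀ a₁ : ℝ) (t s : ℝ) : ℝ := deriv (H22 a₀ a₁ t) s

lemma phi2_eq (a₀ a₁ t s : ℝ) : phi2 a₀ a₁ t s = a₁ / t := by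
  have h : HasDerivAt (fun v : ℝ => a₀ / Real.sqrt t + a₁ * v / t) (a₁ / t) s := by
    simpa using (((hasDerivAt_id s).const_mul a₁).div_const t).const_add (a₀ / Real.sqrt t)
  exact h.deriv

lemma phi1_eq (a₀ a₁ : ℝ) {t : ℝ} (ht : 0 < t) (s : ℝ) :
    phi1 a₀ a₁ t s = -a₀ / (2 * t * Real.sqrt t) - a₁ * s / t ^ 2 := by
  have hst : Real.sqrt t ≠ 0 := (Real.sqrt_pos.mpr ht).ne'
  have h1 : HasDerivAt (fun u : ℝ => a₀ / Real.sqrt u)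
      (-a₀ / (2 * t * Real.sqrt t)) t := by
    have := ((Real.hasDerivAt_sqrt ht.ne').inv hst).const_mul a₀
    refine HasDerivAt.congr_deriv (by exact this) ?_
    rw [Real.sq_sqrt ht.le]
    ring
  have h2 : HasDerivAt (fun u : ℝ => a₁ * s / u) (-(a₁ * s) / t ^ 2) t := by
    have := (hasDerivAt_inv ht.ne').const_mul (a₁ * s)
    simpa [div_eq_mul_inv, neg_div] using this
  have := (h1.add h2)
  simp only [phi1, phiFn]
  rw [show deriv (fun u => a₀ / Real.sqrt u + a₁ * s / u) t = _ from this.deriv]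
  ring

lemma phi12_eq (a₀ a₁ : ℝ) {t : ℝ} (ht : 0 < t) (s : ℝ) :
    phi12 a₀ a₁ t s = -a₁ / t ^ 2 := by
  have hfun : (fun v => phi1 a₀ a₁ t v)
      = fun v => -a₀ / (2 * t * Real.sqrt t) - a₁ * v / t ^ 2 :=
    funext fun v => phi1_eq a₀ a₁ ht v
  have h : HasDerivAt (fun v : ℝ => -a₀ / (2 * t * Real.sqrt t) - a₁ * v / t ^ 2)
      (-a₁ / t ^ 2) s := by
    have := (((hasDerivAt_id s).const_mul a₁).div_const (t ^ 2)).const_sub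
      (-a₀ / (2 * t * Real.sqrt t))
    simpa [neg_div] using this
  rw [phi12, hfun, h.deriv]

lemma phi22_eq (a₀ a₁ t s : ℝ) : phi22 a₀ a₁ t s = 0 := by
  have hfun : phi2 a₀ a₁ t = fun _ => a₁ / t := funext fun v => phi2_eq a₀ a₁ t v
  rw [phi22, hfun, deriv_const]

lemma Hfn_eq (a₀ a₁ : ℝ) (ha₀ : a₀ ≠ 0) {t : ℝ} (ht : 0 < t) (s : ℝ) :
    Hfn a₀ a₁ t s = 1 / (2 * t) := by
  obtain ⟨r, hr, rfl⟩ : ∃ r, 0 < r ∧ r * r = t :=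
    ⟨Real.sqrt t, Real.sqrt_pos.mpr ht, Real.mul_self_sqrt ht.le⟩
  have hrs : Real.sqrt (r * r) = r := Real.sqrt_mul_self hr.le
  rw [Hfn, phi22_eq, phi1_eq a₀ a₁ ht, phi12_eq a₀ a₁ ht, phi2_eq, phiFn, hrs]
  rw [div_eq_div_iff]
  · field_simp
    ring
  · have : 2 * (a₀ / r + a₁ * s / (r * r) - s * (a₁ / (r * r)) + (r * r - s ^ 2) * 0)
        = 2 * a₀ / r := by field_simp; ring
    rw [this]
    positivity
  · positivity

lemma Efn_eq (a₀ a₁ : ℝ) (ha₀ : a₀ ≠ 0) {t : ℝ} (ht : 0 < t) {s : ℝ}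
    (hφ : phiFn a₀ a₁ t s ≠ 0) : Efn a₀ a₁ t s = -s / t := by
  rw [Efn, Hfn_eq a₀ a₁ ha₀ ht, phi1_eq a₀ a₁ ht, phi2_eq]
  obtain ⟨r, hr, rfl⟩ : ∃ r, 0 < r ∧ r * r = t :=
    ⟨Real.sqrt t, Real.sqrt_pos.mpr ht, Real.mul_self_sqrt ht.le⟩
  have hrs : Real.sqrt (r * r) = r := Real.sqrt_mul_self hr.le
  have hφ' : a₀ * r + a₁ * s ≠ 0 := by
    intro h
    apply hφ
    show a₀ / Real.sqrt (r * r) + a₁ * s / (r * r) = 0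
    rw [hrs]
    field_simp
    linear_combination h
  have hrep : phiFn a₀ a₁ (r * r) s = (a₀ * r + a₁ * s) / (r * r) := by
    rw [phiFn, hrs]; field_simp
  rw [hrep, hrs]
  field_simp [hφ']
  rw [div_eq_iff (by rwa [mul_comm r a₀])]
  ring

lemma H2_eq (a₀ a₁ : ℝ) (ha₀ : a₀ ≠ 0) {t : ℝ} (ht : 0 < t) (s : ℝ) :
    H2 a₀ a₁ t s = 0 := by
  have hfun : Hfn a₀ a₁ t = fun _ => 1 / (2 * t) :=
    funext fun v => Hfn_eq a₀ a₁ ha₀ ht v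
  rw [H2, hfun, deriv_const]

lemma H22_eq (a₀ a₁ : ℝ) (ha₀ : a₀ ≠ 0) {t : ℝ} (ht : 0 < t) (s : ℝ) :
    H22 a₀ a₁ t s = 0 := by
  have hfun : H2 a₀ a₁ t = fun _ => 0 := funext fun v => H2_eq a₀ a₁ ha₀ ht v
  rw [H22, hfun, deriv_const]

lemma phi_eventually_ne (a₀ a₁ t : ℝ) {s : ℝ} (hφ : phiFn a₀ a₁ t s ≠ 0) :
    ∀ᶠ v in nhds s, phiFn a₀ a₁ t v ≠ 0 := by
  have hcont : Continuous (phiFn a₀ a₁ t) := by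
    unfold phiFn; fun_prop
  exact hcont.continuousAt.eventually_ne hφ

lemma E2_eq (a₀ a₁ : ℝ) (ha₀ : a₀ ≠ 0) {t : ℝ} (ht : 0 < t) {s : ℝ}
    (hφ : phiFn a₀ a₁ t s ≠ 0) : E2 a₀ a₁ t s = -1 / t := by
  have hE : Efn a₀ a₁ t =ᶠ[nhds s] fun v => -v / t :=
    (phi_eventually_ne a₀ a₁ t hφ).mono fun v hv => Efn_eq a₀ a₁ ha₀ ht hv
  have h : HasDerivAt (fun v : ℝ => -v / t) (-1 / t) s := by
    exact (hasDerivAt_id s).neg.div_const t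
  rw [E2, hE.deriv_eq, h.deriv]

lemma E22_eq (a₀ a₁ : ℝ) (ha₀ : a₀ ≠ 0) {t : ℝ} (ht : 0 < t) {s : ℝ}
    (hφ : phiFn a₀ a₁ t s ≠ 0) : E22 a₀ a₁ t s = 0 := by
  have hE : E2 a₀ a₁ t =ᶠ[nhds s] fun _ => -1 / t :=
    (phi_eventually_ne a₀ a₁ t hφ).mono fun v hv => E2_eq a₀ a₁ ha₀ ht hv
  rw [E22, hE.deriv_eq, deriv_const]

theorem weak_Landsberg_conditions_for_solution (a₀ a₁ : ℝ) (ha₀ : a₀ ≠ 0)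
    (t s : ℝ) (ht : 0 < t) (hφ : phiFn a₀ a₁ t s ≠ 0) :
    E22 a₀ a₁ t s = 0 ∧
    H222 a₀ a₁ t s = 0 ∧
    (Efn a₀ a₁ t s - s * E2 a₀ a₁ t s) * phi2 a₀ a₁ t s
      + (H2 a₀ a₁ t s - s * H22 a₀ a₁ t s)
        * (s * phiFn a₀ a₁ t s + (t - s ^ 2) * phi2 a₀ a₁ t s) = 0 := by
  refine ⟨E22_eq a₀ a₁ ha₀ ht hφ, ?_, ?_⟩
  · have hfun : H22 a₀ a₁ t = fun _ => 0 := funext fun v => H22_eq a₀ a₁ ha₀ ht v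
    rw [H222, hfun, deriv_const]
  · rw [Efn_eq a₀ a₁ ha₀ ht hφ, E2_eq a₀ a₁ ha₀ ht hφ,
      H2_eq a₀ a₁ ha₀ ht, H22_eq a₀ a₁ ha₀ ht]
    ring
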